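/- (Rolle's theorem for α-differentiable functions) Let 0 < a < b, β > 0, α ∈ (0,1), and let f : [a,b] → ℝ be a function such that: (1) f is continuous on [a,b]; (2) f is α-differentiable on (a,b) in the sense of the local M-derivative; (3) f(a) = f(b). Then there exists c ∈ (a,b) such that 𝒟_M^{α,β} f(c) = 0. -/

import Mathlib

open Filter Topology

/-- One-parameter Mittag-Leffler function `E_β(x) = ∑_{k=0}^∞ x^k / Γ(βk+1)`. -/
noncomputable def mittagLeffler (β x : ℝ) : ℝ :=
  ∑' k : ℕ, x ^ k / Real.Gamma (β * k + 1)

/-- `f` has local M-derivative `L` of order `α` with parameter `β` at `t`, i.e.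
`lim_{ε→0} (f (t · E_β (ε t^{-α})) - f t)/ε = L`. -/
def HasLocalMDerivAt (α β : ℝ) (f : ℝ → ℝ) (t L : ℝ) : Prop :=
  Tendsto (fun ε : ℝ => (f (t * mittagLeffler β (ε * t ^ (-α))) - f t) / ε)
    (𝓝[≠] (0 : ℝ)) (𝓝 L)

open MeasureTheory Set

lemma gamma_lb {y : ℝ} (hy : 1 ≤ y) : Real.exp (-2) ≤ Real.Gamma y := by
  have h0 : (0:ℝ) < y := lt_of_lt_of_le one_pos hy
  rw [Real.Gamma_eq_integral h0]
  have hint : IntegrableOn (fun x => Real.exp (-x) * x ^ (y - 1)) (Ioi 0) :=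
    Real.GammaIntegral_convergent h0
  have h1 : ∫ x in Set.Ioc (1:ℝ) 2, Real.exp (-x) * x ^ (y - 1) ≤
      ∫ x in Set.Ioi (0:ℝ), Real.exp (-x) * x ^ (y - 1) := by
    apply setIntegral_mono_set hint
    · filter_upwards [ae_restrict_mem measurableSet_Ioi] with x hx
      have hx2 : (0:ℝ) < x := hx
      positivity
    · exact Filter.Eventually.of_forall (fun x hx => lt_trans one_pos hx.1)
  refine le_trans ?_ h1
  have h2 : Real.exp (-2) = ∫ x in Set.Ioc (1:ℝ) 2, Real.exp (-2) := by
    rw [MeasureTheory.setIntegral_const, Real.volume_real_Ioc]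
    norm_num
  rw [h2]
  apply setIntegral_mono_on
  · exact (integrableOn_const_iff).mpr (Or.inr (by rw [Real.volume_Ioc]; exact ENNReal.ofReal_lt_top))
  · exact hint.mono_set (fun x hx => lt_trans one_pos hx.1)
  · exact measurableSet_Ioc
  · intro x hx
    have hx1 : (1:ℝ) ≤ x := le_of_lt hx.1
    have : (1:ℝ) ≤ x ^ (y - 1) := Real.one_le_rpow hx1 (by linarith)
    calc Real.exp (-2) = Real.exp (-2) * 1 := by ring
    _ ≤ Real.exp (-x) * x ^ (y - 1) :=
      mul_le_mul (Real.exp_le_exp.mpr (by linarith [hx.2])) this one_pos.le (Real.exp_pos _).le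

lemma term_bound {β : ℝ} (hβ : 0 < β) (x : ℝ) (k : ℕ) :
    ‖x ^ k / Real.Gamma (β * k + 1)‖ ≤ Real.exp 2 * |x| ^ k := by
  have h1 : (1:ℝ) ≤ β * k + 1 := by
    have : (0:ℝ) ≤ β * k := by positivity
    linarith
  have hg := gamma_lb h1
  have hgpos : 0 < Real.Gamma (β * k + 1) := lt_of_lt_of_le (Real.exp_pos _) hg
  rw [Real.norm_eq_abs, abs_div, abs_of_pos hgpos, abs_pow, div_le_iff₀ hgpos]
  calc |x| ^ k = Real.exp 2 * |x| ^ k * Real.exp (-2) := by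
        rw [mul_assoc, mul_comm (|x|^k), ← mul_assoc, ← Real.exp_add]; norm_num
    _ ≤ Real.exp 2 * |x| ^ k * Real.Gamma (β * k + 1) := by
        apply mul_le_mul_of_nonneg_left hg; positivity

lemma ml_sub_one_bound {β : ℝ} (hβ : 0 < β) {x : ℝ} (hx : |x| ≤ 1/2) :
    |mittagLeffler β x - 1| ≤ 2 * Real.exp 2 * |x| := by
  have hxlt : |x| < 1 := lt_of_le_of_lt hx (by norm_num)
  have hsum : Summable (fun k : ℕ => x ^ k / Real.Gamma (β * k + 1)) := by
    apply Summable.of_norm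
    apply Summable.of_nonneg_of_le (fun k => norm_nonneg _) (term_bound hβ x)
    exact (summable_geometric_of_lt_one (abs_nonneg x) hxlt).mul_left _
  have hsplit := Summable.tsum_eq_zero_add hsum
  have hml : mittagLeffler β x - 1 = ∑' k : ℕ, x ^ (k+1) / Real.Gamma (β * (k+1) + 1) := by
    rw [mittagLeffler, hsplit]
    push_cast
    norm_num [Real.Gamma_one]
  rw [hml]
  have hgeo : HasSum (fun k : ℕ => (Real.exp 2 * |x|) * |x| ^ k)
      ((Real.exp 2 * |x|) * (1 - |x|)⁻¹) :=
    (hasSum_geometric_of_lt_one (abs_nonneg x) hxlt).mul_left _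
  have hb : ∀ k : ℕ, ‖x ^ (k+1) / Real.Gamma (β * (k+1) + 1)‖ ≤ (Real.exp 2 * |x|) * |x| ^ k := by
    intro k
    have := term_bound hβ x (k+1)
    calc ‖x ^ (k+1) / Real.Gamma (β * (k+1) + 1)‖ ≤ Real.exp 2 * |x| ^ (k+1) := by
          convert this using 3; push_cast; ring
      _ = (Real.exp 2 * |x|) * |x| ^ k := by ring
  have := tsum_of_norm_bounded hgeo hb
  refine le_trans this ?_
  have h1x : (1:ℝ)/2 ≤ 1 - |x| := by linarith
  have : (1 - |x|)⁻¹ ≤ 2 := by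
    rw [inv_le_comm₀ (by linarith) (by norm_num)]; linarith
  calc Real.exp 2 * |x| * (1 - |x|)⁻¹ ≤ Real.exp 2 * |x| * 2 :=
        mul_le_mul_of_nonneg_left this (by positivity)
    _ = 2 * Real.exp 2 * |x| := by ring

lemma ml_tendsto (β : ℝ) (hβ : 0 < β) :
    Tendsto (fun x => mittagLeffler β x) (𝓝 0) (𝓝 1) := by
  have h : Tendsto (fun x => mittagLeffler β x - 1) (𝓝 0) (𝓝 0) := by
    refine squeeze_zero_norm' (f := fun x => mittagLeffler β x - 1)
      (a := fun x => 2 * Real.exp 2 * |x|) ?_ ?_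
    · filter_upwards [Metric.ball_mem_nhds (0:ℝ) (by norm_num : (0:ℝ) < 1/2)] with x hx
      have : |x| ≤ 1/2 := by
        have := Metric.mem_ball.mp hx
        rw [Real.dist_eq, sub_zero] at this
        linarith
      simpa using ml_sub_one_bound hβ this
    · have : Tendsto (fun x : ℝ => |x|) (𝓝 0) (𝓝 0) := by
        simpa using continuous_abs.tendsto (0:ℝ)
      simpa using this.const_mul (2 * Real.exp 2)
  have := h.add_const 1
  simpa using this

lemma arg_tendsto {α β c : ℝ} (hβ : 0 < β) (hc : 0 < c) :
    Tendsto (fun ε : ℝ => c * mittagLeffler β (ε * c ^ (-α))) (𝓝[≠] 0) (𝓝 c) := by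
  have h1 : Tendsto (fun ε : ℝ => ε * c ^ (-α)) (𝓝 0) (𝓝 0) := by
    simpa using (tendsto_id (x := 𝓝 (0:ℝ))).mul_const (c ^ (-α))
  have h2 : Tendsto (fun ε : ℝ => mittagLeffler β (ε * c ^ (-α))) (𝓝 0) (𝓝 1) :=
    (ml_tendsto β hβ).comp h1
  have := h2.const_mul c
  simp only [mul_one] at this
  exact this.mono_left nhdsWithin_le_nhds

lemma max_case {a b α β c L : ℝ} (ha : 0 < a) (hab : a < b) (hβ : 0 < β)
    {f : ℝ → ℝ} (hc : c ∈ Set.Ioo a b) (hL : HasLocalMDerivAt α β f c L)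
    (hmax : ∀ x ∈ Set.Icc a b, f x ≤ f c) : L ≤ 0 := by
  have hcpos : 0 < c := lt_trans ha hc.1
  have harg := arg_tendsto (α := α) hβ hcpos
  have hev : ∀ᶠ ε in 𝓝[≠] (0:ℝ),
      f (c * mittagLeffler β (ε * c ^ (-α))) - f c ≤ 0 := by
    filter_upwards [harg (Ioo_mem_nhds hc.1 hc.2)] with ε hε
    have := hmax _ (Set.Ioo_subset_Icc_self hε)
    linarith
  have hle : 𝓝[>] (0:ℝ) ≤ 𝓝[≠] (0:ℝ) :=
    nhdsWithin_mono 0 (fun x hx => ne_of_gt hx)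
  apply le_of_tendsto (hL.mono_left hle)
  filter_upwards [hev.filter_mono hle, self_mem_nhdsWithin] with ε h1 (h2 : 0 < ε)
  exact div_nonpos_iff.mpr (Or.inr ⟨h1, le_of_lt h2⟩)

lemma max_case' {a b α β c L : ℝ} (ha : 0 < a) (hab : a < b) (hβ : 0 < β)
    {f : ℝ → ℝ} (hc : c ∈ Set.Ioo a b) (hL : HasLocalMDerivAt α β f c L)
    (hmax : ∀ x ∈ Set.Icc a b, f x ≤ f c) : L = 0 := by
  refine le_antisymm (max_case ha hab hβ hc hL hmax) ?_
  have hcpos : 0 < c := lt_trans ha hc.1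
  have harg := arg_tendsto (α := α) hβ hcpos
  have hev : ∀ᶠ ε in 𝓝[≠] (0:ℝ),
      f (c * mittagLeffler β (ε * c ^ (-α))) - f c ≤ 0 := by
    filter_upwards [harg (Ioo_mem_nhds hc.1 hc.2)] with ε hε
    have := hmax _ (Set.Ioo_subset_Icc_self hε)
    linarith
  have hle : 𝓝[<] (0:ℝ) ≤ 𝓝[≠] (0:ℝ) :=
    nhdsWithin_mono 0 (fun x hx => ne_of_lt hx)
  apply ge_of_tendsto (hL.mono_left hle)
  filter_upwards [hev.filter_mono hle, self_mem_nhdsWithin] with ε h1 (h2 : ε < 0)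
  exact div_nonneg_iff.mpr (Or.inr ⟨h1, le_of_lt h2⟩)

lemma min_case' {a b α β c L : ℝ} (ha : 0 < a) (hab : a < b) (hβ : 0 < β)
    {f : ℝ → ℝ} (hc : c ∈ Set.Ioo a b) (hL : HasLocalMDerivAt α β f c L)
    (hmin : ∀ x ∈ Set.Icc a b, f c ≤ f x) : L = 0 := by
  have hneg : HasLocalMDerivAt α β (fun x => -f x) c (-L) := by
    unfold HasLocalMDerivAt at hL ⊢
    have := hL.neg
    convert this using 2 with ε
    ring
  have := max_case' ha hab hβ hc hneg (fun x hx => neg_le_neg (hmin x hx))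
  linarith


/-- Rolle's theorem for α-differentiable functions. -/
theorem stmt12 (a b α β : ℝ) (ha : 0 < a) (hab : a < b)
    (hα : α ∈ Set.Ioo (0 : ℝ) 1) (hβ : 0 < β)
    (f D : ℝ → ℝ) (hc : ContinuousOn f (Set.Icc a b))
    (hd : ∀ x ∈ Set.Ioo a b, HasLocalMDerivAt α β f x (D x))
    (hfab : f a = f b) :
    ∃ c ∈ Set.Ioo a b, D c = 0 := by 
  obtain ⟨cM, hcM, hM⟩ := isCompact_Icc.exists_isMaxOn (Set.nonempty_Icc.mpr hab.le) hc
  obtain ⟨cm, hcm, hm⟩ := isCompact_Icc.exists_isMinOn (Set.nonempty_Icc.mpr hab.le) hc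
  have hend : ∀ x ∈ Set.Icc a b, x ∉ Set.Ioo a b → f x = f a := by
    intro x hx hnx
    rcases eq_or_lt_of_le hx.1 with h | h
    · rw [← h]
    · have hxb : x = b := by
        by_contra hxb
        exact hnx ⟨h, lt_of_le_of_ne hx.2 hxb⟩
      rw [hxb, hfab]
  by_cases hMi : cM ∈ Set.Ioo a b
  · exact ⟨cM, hMi, max_case' ha hab hβ hMi (hd cM hMi) hM⟩
  by_cases hmi : cm ∈ Set.Ioo a b
  · exact ⟨cm, hmi, min_case' ha hab hβ hmi (hd cm hmi) hm⟩
  -- f is constant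
  have hconst : ∀ x ∈ Set.Icc a b, f x = f a := by
    intro x hx
    have h1 : f x ≤ f cM := hM hx
    have h2 : f cm ≤ f x := hm hx
    rw [hend cM hcM hMi] at h1
    rw [hend cm hcm hmi] at h2
    linarith
  set c := (a + b) / 2 with hcdef
  have hcmem : c ∈ Set.Ioo a b := ⟨by simp [hcdef]; linarith, by simp [hcdef]; linarith⟩
  refine ⟨c, hcmem, ?_⟩
  have hzero : HasLocalMDerivAt α β f c 0 := by
    unfold HasLocalMDerivAt
    have hcpos : 0 < c := lt_trans ha hcmem.1
    have harg := arg_tendsto (α := α) (β := β) hβ hcpos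
    have : ∀ᶠ ε in 𝓝[≠] (0:ℝ),
        (f (c * mittagLeffler β (ε * c ^ (-α))) - f c) / ε = 0 := by
      filter_upwards [harg (Ioo_mem_nhds hcmem.1 hcmem.2)] with ε hε
      rw [hconst _ (Set.Ioo_subset_Icc_self hε), hconst _ (Set.Ioo_subset_Icc_self hcmem)]
      simp
    exact tendsto_const_nhds.congr' (by filter_upwards [this] with ε h; exact h.symm)
  exact tendsto_nhds_unique (hd c hcmem) hzero
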